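/- Let S = ℂ[T_1, …, T_r] be a polynomial ring graded by a finitely generated abelian group K via deg(T_i) = q_i, and suppose the grading is pointed. Then every (φ, ψ) ∈ Aut_K(S) satisfies ψ({q_1, …, q_r}) = {q_1, …, q_r}, i.e., ψ permutes the set of generator weights Ω_S. -/
import Mathlib

open TensorProduct

noncomputable def wtGrading {K : Type} [AddCommGroup K] {r : ℕ} (q : Fin r → K) :
    K → Submodule ℂ (MvPolynomial (Fin r) ℂ) := fun w =>
  Submodule.span ℂ {m | ∃ ν : Fin r →₀ ℕ,
    m = MvPolynomial.monomial ν (1 : ℂ) ∧ ν.sum (fun i n => n • q i) = w}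

namespace AuxWt

variable {K : Type} [AddCommGroup K] {r : ℕ} (q : Fin r → K)

/-- weight of a monomial exponent -/
def wt (ν : Fin r →₀ ℕ) : K := ν.sum (fun i n => n • q i)

lemma wt_add (a b : Fin r →₀ ℕ) : wt q (a + b) = wt q a + wt q b :=
  Finsupp.sum_add_index' (fun i => zero_smul ℕ (q i)) (fun i b₁ b₂ => add_smul b₁ b₂ (q i))

lemma wt_zero : wt q 0 = 0 := Finsupp.sum_zero_index

lemma deg_add (a b : Fin r →₀ ℕ) :
    (a + b).sum (fun _ n => n) = a.sum (fun _ n => n) + b.sum (fun _ n => n) :=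
  Finsupp.sum_add_index' (fun _ => rfl) (fun _ _ _ => rfl)

lemma one_le_deg {ν : Fin r →₀ ℕ} (hν : ν ≠ 0) : 1 ≤ ν.sum (fun _ n => n) := by
  by_contra hc
  push_neg at hc
  interval_cases h : ν.sum (fun _ n => n)
  · apply hν
    ext a
    by_cases ha : a ∈ ν.support
    · exact Finset.sum_eq_zero_iff.mp h a ha
    · simpa using Finsupp.notMem_support_iff.mp ha

/-- submodule of polynomials with support in a set -/
noncomputable def suppIn (s : Set (Fin r →₀ ℕ)) : Submodule ℂ (MvPolynomial (Fin r) ℂ) where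
  carrier := {p | ∀ ν ∈ p.support, ν ∈ s}
  zero_mem' := by simp
  add_mem' := by
    intro a b ha hb ν hν
    rcases Finset.mem_union.mp (MvPolynomial.support_add hν) with h | h
    · exact ha ν h
    · exact hb ν h
  smul_mem' := by
    intro c p hp ν hν
    exact hp ν (MvPolynomial.support_smul hν)

lemma mem_suppIn {s : Set (Fin r →₀ ℕ)} {p : MvPolynomial (Fin r) ℂ} :
    p ∈ suppIn s ↔ ∀ ν ∈ p.support, ν ∈ s := Iff.rfl

lemma wtGrading_le_suppIn (w : K) : wtGrading q w ≤ suppIn {ν | wt q ν = w} := by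
  rw [wtGrading, Submodule.span_le]
  rintro m ⟨ν, rfl, hν⟩
  intro μ hμ
  rw [MvPolynomial.support_monomial] at hμ
  simp only [one_ne_zero, if_false, Finset.mem_singleton] at hμ
  subst hμ
  exact hν

lemma mem_wtGrading_of_supp {w : K} {p : MvPolynomial (Fin r) ℂ}
    (hp : ∀ ν ∈ p.support, wt q ν = w) : p ∈ wtGrading q w := by
  rw [← MvPolynomial.support_sum_monomial_coeff p]
  apply Submodule.sum_mem
  intro ν hν
  have : (MvPolynomial.monomial ν) (MvPolynomial.coeff ν p) =
      (MvPolynomial.coeff ν p) • (MvPolynomial.monomial ν (1 : ℂ)) := by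
    rw [MvPolynomial.smul_monomial, smul_eq_mul, mul_one]
  rw [this]
  exact Submodule.smul_mem _ _ (Submodule.subset_span ⟨ν, rfl, hp ν hν⟩)

lemma monomial_mem_wtGrading (ν : Fin r →₀ ℕ) :
    MvPolynomial.monomial ν (1 : ℂ) ∈ wtGrading q (wt q ν) :=
  Submodule.subset_span ⟨ν, rfl, rfl⟩

lemma X_mem_wtGrading (i : Fin r) :
    (MvPolynomial.X i : MvPolynomial (Fin r) ℂ) ∈ wtGrading q (q i) := by
  have h1 : wt q (Finsupp.single i 1) = q i := by
    rw [wt, Finsupp.sum_single_index] <;> simp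
  have := monomial_mem_wtGrading q (Finsupp.single i 1)
  rw [h1] at this
  have hX : (MvPolynomial.X i : MvPolynomial (Fin r) ℂ) =
      MvPolynomial.monomial (Finsupp.single i 1) 1 := rfl
  rwa [hX]


/-- sum of products of components of nonzero degrees -/
noncomputable def D (w : K) : Submodule ℂ (MvPolynomial (Fin r) ℂ) :=
  ⨆ (u : K) (v : K) (_ : u + v = w) (_ : u ≠ 0) (_ : v ≠ 0),
    wtGrading q u * wtGrading q v

lemma mul_le_wtGrading (u v : K) :
    wtGrading q u * wtGrading q v ≤ wtGrading q (u + v) := by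
  rw [Submodule.mul_le]
  intro a ha b hb
  apply mem_wtGrading_of_supp
  intro ν hν
  classical
  obtain ⟨μ, hμ, κ, hκ, rfl⟩ := Finset.mem_add.mp (MvPolynomial.support_mul a b hν)
  rw [wt_add, wtGrading_le_suppIn q u ha μ hμ, wtGrading_le_suppIn q v hb κ hκ]

lemma D_le (w : K) : D q w ≤ wtGrading q w := by
  refine iSup_le fun u => iSup_le fun v => iSup_le fun h1 => iSup_le fun _ => iSup_le fun _ => ?_
  rw [← h1]
  exact mul_le_wtGrading q u v

lemma ne_zero_of_wt_ne_zero {ν : Fin r →₀ ℕ} {u : K} (hw : wt q ν = u) (hu : u ≠ 0) :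
    ν ≠ 0 := by
  rintro rfl
  exact hu (hw ▸ (wt_zero q).symm)

lemma D_le_suppIn (w : K) : D q w ≤ suppIn {ν | 2 ≤ ν.sum fun _ n => n} := by
  refine iSup_le fun u => iSup_le fun v => iSup_le fun h1 => iSup_le fun hu => iSup_le fun hv => ?_
  rw [Submodule.mul_le]
  intro a ha b hb ν hν
  classical
  obtain ⟨μ, hμ, κ, hκ, rfl⟩ := Finset.mem_add.mp (MvPolynomial.support_mul a b hν)
  have h1 : μ ≠ 0 := ne_zero_of_wt_ne_zero q (wtGrading_le_suppIn q u ha μ hμ) hu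
  have h2 : κ ≠ 0 := ne_zero_of_wt_ne_zero q (wtGrading_le_suppIn q v hb κ hκ) hv
  have := deg_add (r := r) μ κ
  have g1 := one_le_deg h1
  have g2 := one_le_deg h2
  simp only [Set.mem_setOf_eq, this]
  omega

lemma X_notMem_D (i : Fin r) :
    (MvPolynomial.X i : MvPolynomial (Fin r) ℂ) ∉ D q (q i) := by
  intro hmem
  have := D_le_suppIn q (q i) hmem (Finsupp.single i 1)
    (by rw [MvPolynomial.support_X]; exact Finset.mem_singleton_self _)
  simp only [Set.mem_setOf_eq] at this
  rw [Finsupp.sum_single_index rfl] at this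
  omega

lemma wtGrading_le_D {w : K} (hw : w ≠ 0) (hnr : w ∉ Set.range q)
    (hq0 : ∀ i, q i ≠ 0) : wtGrading q w ≤ D q w := by
  rw [wtGrading, Submodule.span_le]
  rintro m ⟨ν, rfl, hν⟩
  have hν : wt q ν = w := hν
  have hne : ν ≠ 0 := ne_zero_of_wt_ne_zero q hν hw
  obtain ⟨i, hi⟩ := Finsupp.ne_iff.mp hne
  simp only [Finsupp.coe_zero, Pi.zero_apply] at hi
  set ν' : Fin r →₀ ℕ := ν - Finsupp.single i 1 with hν'
  have hsum : Finsupp.single i 1 + ν' = ν := by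
    ext a
    simp only [Finsupp.add_apply, Finsupp.tsub_apply, Finsupp.single_apply, hν']
    by_cases hai : i = a
    · subst hai
      rw [if_pos rfl]
      omega
    · simp only [if_neg hai]; omega
  have hwt : q i + wt q ν' = w := by
    have : wt q (Finsupp.single i 1) = q i := by
      rw [wt, Finsupp.sum_single_index] <;> simp
    rw [← hν, ← hsum, wt_add, this]
  have hv : wt q ν' ≠ 0 := by
    intro h0'
    exact hnr ⟨i, by rw [← hwt, h0', add_zero]⟩
  have hmem : MvPolynomial.monomial ν (1 : ℂ) ∈
      wtGrading q (q i) * wtGrading q (wt q ν') := by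
    have : MvPolynomial.monomial ν (1 : ℂ) =
        MvPolynomial.X i * MvPolynomial.monomial ν' (1 : ℂ) := by
      rw [← hsum, MvPolynomial.monomial_single_add, pow_one]
    rw [this]
    exact Submodule.mul_mem_mul (X_mem_wtGrading q i) (monomial_mem_wtGrading q ν')
  have hle : wtGrading q (q i) * wtGrading q (wt q ν') ≤ D q w :=
    le_iSup_of_le (q i) (le_iSup_of_le (wt q ν')
      (le_iSup_of_le hwt (le_iSup_of_le (hq0 i) (le_iSup_of_le hv le_rfl))))
  exact hle hmem

lemma map_D_le (φ : MvPolynomial (Fin r) ℂ ≃ₐ[ℂ] MvPolynomial (Fin r) ℂ) (ψ : K ≃+ K)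
    (h : ∀ w : K, Submodule.map (φ : MvPolynomial (Fin r) ℂ →ₗ[ℂ] MvPolynomial (Fin r) ℂ)
      (wtGrading q w) = wtGrading q (ψ w)) (w : K) :
    Submodule.map (φ : MvPolynomial (Fin r) ℂ →ₗ[ℂ] MvPolynomial (Fin r) ℂ) (D q w)
      ≤ D q (ψ w) := by
  rw [D, Submodule.map_iSup]
  refine iSup_le fun u => ?_
  rw [Submodule.map_iSup]
  refine iSup_le fun v => ?_
  rw [Submodule.map_iSup]
  refine iSup_le fun h1 => ?_
  rw [Submodule.map_iSup]
  refine iSup_le fun hu => ?_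
  rw [Submodule.map_iSup]
  refine iSup_le fun hv => ?_
  have hmul : Submodule.map (φ : MvPolynomial (Fin r) ℂ →ₗ[ℂ] MvPolynomial (Fin r) ℂ)
      (wtGrading q u * wtGrading q v) = wtGrading q (ψ u) * wtGrading q (ψ v) := by
    have := Submodule.map_mul (wtGrading q u) (wtGrading q v) φ.toAlgHom
    rw [show φ.toAlgHom.toLinearMap =
      (φ : MvPolynomial (Fin r) ℂ →ₗ[ℂ] MvPolynomial (Fin r) ℂ) from rfl] at this
    rw [this, h u, h v]
  rw [hmul]
  refine le_iSup_of_le (ψ u) (le_iSup_of_le (ψ v)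
    (le_iSup_of_le (by rw [← map_add, h1]) (le_iSup_of_le
      (by simpa using hu) (le_iSup_of_le (by simpa using hv) le_rfl))))


lemma q_ne_zero (h0 : wtGrading q 0 = (1 : Submodule ℂ (MvPolynomial (Fin r) ℂ)))
    (i : Fin r) : q i ≠ 0 := by
  intro hqi
  have hX : (MvPolynomial.X i : MvPolynomial (Fin r) ℂ) ∈ wtGrading q 0 := by
    rw [← hqi]; exact X_mem_wtGrading q i
  rw [h0, Submodule.one_eq_span, Submodule.mem_span_singleton] at hX
  obtain ⟨c, hc⟩ := hX
  have hcoeff := congrArg (MvPolynomial.coeff (Finsupp.single i 1)) hc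
  have hne : (0 : Fin r →₀ ℕ) ≠ Finsupp.single i 1 := fun e =>
    (one_ne_zero : (1 : ℕ) ≠ 0) (Finsupp.single_eq_zero.mp e.symm)
  rw [MvPolynomial.coeff_smul, MvPolynomial.coeff_one, if_neg hne] at hcoeff
  rw [MvPolynomial.coeff_X] at hcoeff
  simp at hcoeff

lemma symm_h (φ : MvPolynomial (Fin r) ℂ ≃ₐ[ℂ] MvPolynomial (Fin r) ℂ) (ψ : K ≃+ K)
    (h : ∀ w : K, Submodule.map (φ : MvPolynomial (Fin r) ℂ →ₗ[ℂ] MvPolynomial (Fin r) ℂ)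
      (wtGrading q w) = wtGrading q (ψ w)) (w : K) :
    Submodule.map (φ.symm : MvPolynomial (Fin r) ℂ →ₗ[ℂ] MvPolynomial (Fin r) ℂ)
      (wtGrading q w) = wtGrading q (ψ.symm w) := by
  have h1 := h (ψ.symm w)
  rw [AddEquiv.apply_symm_apply] at h1
  rw [← h1, ← Submodule.map_comp]
  have : (φ.symm : MvPolynomial (Fin r) ℂ →ₗ[ℂ] MvPolynomial (Fin r) ℂ).comp
      (φ : MvPolynomial (Fin r) ℂ →ₗ[ℂ] MvPolynomial (Fin r) ℂ) = LinearMap.id := by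
    ext x; simp
  rw [this, Submodule.map_id]

lemma eq_of_eq (φ : MvPolynomial (Fin r) ℂ ≃ₐ[ℂ] MvPolynomial (Fin r) ℂ) (ψ : K ≃+ K)
    (h : ∀ w : K, Submodule.map (φ : MvPolynomial (Fin r) ℂ →ₗ[ℂ] MvPolynomial (Fin r) ℂ)
      (wtGrading q w) = wtGrading q (ψ w)) (w : K)
    (hD : D q (ψ w) = wtGrading q (ψ w)) : D q w = wtGrading q w := by
  refine le_antisymm (D_le q w) fun x hx => ?_
  have h1 : φ x ∈ wtGrading q (ψ w) := by
    rw [← h w]; exact ⟨x, hx, rfl⟩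
  rw [← hD] at h1
  have h2 := map_D_le q φ.symm ψ.symm (symm_h q φ ψ h) (ψ w) ⟨φ x, h1, rfl⟩
  simpa using h2

lemma pred_iff_mem_range (h0 : wtGrading q 0 = (1 : Submodule ℂ (MvPolynomial (Fin r) ℂ)))
    (w : K) : (w ≠ 0 ∧ D q w ≠ wtGrading q w) ↔ w ∈ Set.range q := by
  constructor
  · rintro ⟨hw, hne⟩
    by_contra hnr
    exact hne (le_antisymm (D_le q w) (wtGrading_le_D q hw hnr (q_ne_zero q h0)))
  · rintro ⟨i, rfl⟩
    refine ⟨q_ne_zero q h0 i, fun heq => ?_⟩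
    have hX := X_mem_wtGrading q i
    rw [← heq] at hX
    exact X_notMem_D q i hX

end AuxWt

/-- If the `K`-grading of `S = ℂ[T_1,…,T_r]` given by `deg T_i = q_i`
is pointed, then every `(φ, ψ) ∈ Aut_K(S)` satisfies `ψ({q_1,…,q_r}) = {q_1,…,q_r}`:
`ψ` permutes the set of generator weights. -/
theorem aut_permutes_generator_weights
    {K : Type} [AddCommGroup K] [AddGroup.FG K] {r : ℕ} (q : Fin r → K)
    (h0 : wtGrading q 0 = (1 : Submodule ℂ (MvPolynomial (Fin r) ℂ)))
    (hpointed : ∀ x : ℚ ⊗[ℤ] K,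
      x ∈ Submodule.span {c : ℚ // 0 ≤ c}
            ((fun k : K => ((1 : ℚ) ⊗ₜ[ℤ] k : ℚ ⊗[ℤ] K)) '' {w : K | wtGrading q w ≠ ⊥}) →
      -x ∈ Submodule.span {c : ℚ // 0 ≤ c}
            ((fun k : K => ((1 : ℚ) ⊗ₜ[ℤ] k : ℚ ⊗[ℤ] K)) '' {w : K | wtGrading q w ≠ ⊥}) →
      x = 0)
    (φ : MvPolynomial (Fin r) ℂ ≃ₐ[ℂ] MvPolynomial (Fin r) ℂ) (ψ : K ≃+ K)
    (h : ∀ w : K, Submodule.map (φ : MvPolynomial (Fin r) ℂ →ₗ[ℂ] MvPolynomial (Fin r) ℂ)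
      (wtGrading q w) = wtGrading q (ψ w)) :
    ⇑ψ '' Set.range q = Set.range q := by
  have key : ∀ w : K, w ∈ Set.range q ↔ ψ w ∈ Set.range q := by
    intro w
    rw [← AuxWt.pred_iff_mem_range q h0 w, ← AuxWt.pred_iff_mem_range q h0 (ψ w)]
    constructor
    · rintro ⟨hw, hne⟩
      refine ⟨fun h' => hw (by apply ψ.injective; rw [h', map_zero]), fun hD => ?_⟩
      exact hne (AuxWt.eq_of_eq q φ ψ h w hD)
    · rintro ⟨hw, hne⟩
      refine ⟨fun h' => hw (by rw [h', map_zero]), fun hD => ?_⟩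
      have := AuxWt.eq_of_eq q φ.symm ψ.symm (AuxWt.symm_h q φ ψ h) (ψ w)
        (by simp only [AddEquiv.symm_apply_apply]; exact hD)
      exact hne this
  ext w
  constructor
  · rintro ⟨u, hu, rfl⟩
    exact (key u).mp hu
  · intro hw
    refine ⟨ψ.symm w, (key (ψ.symm w)).mpr (by simpa using hw), ψ.apply_symm_apply w⟩
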